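/- Let N : ℕ → ℕ → ℕ satisfy the recurrence N(ℓ,1) = 1 for all ℓ ≥ 1; N(1,m) = m − 1 for all m ≥ 2; N(ℓ,m) = N(m,m) for all ℓ > m ≥ 2; and N(ℓ,m) = ∑_{j=1}^{m−1} N(ℓ−1,j) for all 2 ≤ ℓ ≤ m. Then for all m ≥ 5 and all ℓ with 2 ≤ ℓ ≤ m − 3, N(ℓ,m) = ∑_{j=0}^{ℓ} C(m−2, j), where C(·,·) denotes the binomial coefficient. -/

import Mathlib

lemma hockey (n i : ℕ) : ∑ k ∈ Finset.range n, Nat.choose k i = Nat.choose n (i + 1) := by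
  induction n with
  | zero => simp
  | succ n ih => rw [Finset.sum_range_succ, ih, Nat.choose_succ_succ' n i]; ring

lemma innerSumAux (m i : ℕ) (hm : 2 ≤ m) :
    ∑ j ∈ Finset.Icc 1 (m - 1), Nat.choose (j - 2) i
      = (if i = 0 then 1 else 0) + Nat.choose (m - 2) (i + 1) := by
  have h1 : Finset.Icc 1 (m - 1) = insert 1 (Finset.Icc 2 (m - 1)) := by
    ext x; simp [Finset.mem_Icc, Finset.mem_insert]; omega
  rw [h1, Finset.sum_insert (by simp)]
  have h2 : ∑ j ∈ Finset.Icc 2 (m - 1), Nat.choose (j - 2) i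
      = ∑ k ∈ Finset.range (m - 2), Nat.choose k i := by
    apply Finset.sum_nbij' (fun j => j - 2) (fun k => k + 2) <;>
      (intros; simp_all [Finset.mem_Icc, Finset.mem_range] <;> omega)
  rw [h2, hockey]
  rcases i with _ | i <;> simp

lemma main_lemma (N : ℕ → ℕ → ℕ)
    (h1 : ∀ l, 1 ≤ l → N l 1 = 1)
    (h2 : ∀ m, 2 ≤ m → N 1 m = m - 1)
    (h3 : ∀ l m, 2 ≤ m → m < l → N l m = N m m)
    (h4 : ∀ l m, 2 ≤ l → l ≤ m → N l m = ∑ j ∈ Finset.Icc 1 (m - 1), N (l - 1) j) :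
    ∀ l, 1 ≤ l → ∀ m, 1 ≤ m →
      N l m = ∑ j ∈ Finset.range (l + 1), Nat.choose (m - 2) j := by
  intro l
  induction l using Nat.strong_induction_on with
  | _ l IH =>
    intro hl m hm
    rcases eq_or_lt_of_le hm with hm1 | hm2
    · -- m = 1
      rw [← hm1, h1 l hl]
      have : (1 : ℕ) - 2 = 0 := rfl
      rw [this]
      rw [Finset.sum_eq_single 0 (by intro b _ hb; exact Nat.choose_eq_zero_of_lt (by omega))
        (by simp)]
      simp
    · -- m ≥ 2
      rcases eq_or_lt_of_le hl with hl1 | hl2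
      · -- l = 1
        rw [← hl1, h2 m hm2]
        simp [Finset.sum_range_succ]
        omega
      · -- l ≥ 2
        rcases le_or_gt l m with hlm | hml
        · -- 2 ≤ l ≤ m : use h4
          rw [h4 l m hl2 hlm]
          have step : ∀ j ∈ Finset.Icc 1 (m - 1),
              N (l - 1) j = ∑ i ∈ Finset.range (l - 1 + 1), Nat.choose (j - 2) i := by
            intro j hj
            simp only [Finset.mem_Icc] at hj
            exact IH (l - 1) (by omega) (by omega) j hj.1
          rw [Finset.sum_congr rfl step, Finset.sum_comm]
          have := fun i => innerSumAux m i hm2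
          rw [Finset.sum_congr rfl (fun i _ => this i)]
          rw [Finset.sum_add_distrib]
          have e1 : ∑ i ∈ Finset.range (l - 1 + 1), (if i = 0 then 1 else 0) = 1 := by
            rw [Finset.sum_ite_eq' (Finset.range (l - 1 + 1)) 0 (fun _ => 1)]
            simp
          rw [e1]
          have e2 : ∑ i ∈ Finset.range (l - 1 + 1), Nat.choose (m - 2) (i + 1)
              = ∑ i ∈ Finset.Ico 1 (l + 1), Nat.choose (m - 2) i := by
            rw [Finset.sum_Ico_eq_sum_range]
            apply Finset.sum_congr (by congr 1; omega) (fun i _ => by rw [add_comm 1 i])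
          rw [e2]
          have e3 : Finset.range (l + 1) = insert 0 (Finset.Ico 1 (l + 1)) := by
            ext x; simp [Finset.mem_Ico]; omega
          rw [e3, Finset.sum_insert (by simp)]
          simp
        · -- m < l : use h3
          rw [h3 l m hm2 hml, IH m hml (by omega) m (by omega)]
          apply Finset.sum_subset
          · intro x hx; simp only [Finset.mem_range] at *; omega
          · intro x _ hx
            simp only [Finset.mem_range, not_lt] at hx
            exact Nat.choose_eq_zero_of_lt (by omega)

theorem capacity_binomial_sum
    (N : ℕ → ℕ → ℕ)
    (h1 : ∀ l, 1 ≤ l → N l 1 = 1)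
    (h2 : ∀ m, 2 ≤ m → N 1 m = m - 1)
    (h3 : ∀ l m, 2 ≤ m → m < l → N l m = N m m)
    (h4 : ∀ l m, 2 ≤ l → l ≤ m → N l m = ∑ j ∈ Finset.Icc 1 (m - 1), N (l - 1) j) :
    ∀ m, 5 ≤ m → ∀ l, 2 ≤ l → l ≤ m - 3 →
      N l m = ∑ j ∈ Finset.range (l + 1), Nat.choose (m - 2) j := by
  intro m hm l hl _
  exact main_lemma N h1 h2 h3 h4 l (by omega) m (by omega)
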